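/- arXiv:1811.12682 — 4 statements merged into one kernel-verified Lean document; each statement's English description precedes it below -/
import Mathlib

section
/- Let ξ* and ξ' be probability measures on a finite set S, f : S → ℝ^k, with M(ξ) = Σ_s ξ(s) f(s) f(s)ᵀ and M(ξ*) invertible. Then the derivative at α = 0 of α ↦ log det(M((1-α)ξ* + αξ')) equals -k + Σ_{s∈S} ξ'(s) f(s)ᵀ M(ξ*)⁻¹ f(s). -/
open Matrix

noncomputable def detCML (k : ℕ) : ContinuousMultilinearMap ℝ (fun _ : Fin k => (Fin k → ℝ)) ℝ :=
  { (detRowAlternating : (Fin k → ℝ) [⋀^Fin k]→ₗ[ℝ] ℝ).toMultilinearMap with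
    cont := by
      have h : Continuous fun m : Matrix (Fin k) (Fin k) ℝ => m.det := continuous_id.matrix_det
      exact h }

lemma detCML_apply (k : ℕ) (m : Matrix (Fin k) (Fin k) ℝ) : detCML k m = m.det := rfl

lemma det_updateRow_eq (k : ℕ) (A : Matrix (Fin k) (Fin k) ℝ) (i : Fin k) (v : Fin k → ℝ) :
    (A.updateRow i v).det = ∑ j, v j * A.adjugate j i := by
  let L : (Fin k → ℝ) →ₗ[ℝ] ℝ :=
    { toFun := fun v => (A.updateRow i v).det
      map_add' := fun u v => Matrix.det_updateRow_add A i u v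
      map_smul' := fun c v => Matrix.det_updateRow_smul A i c v }
  have hv : v = ∑ j, v j • (Pi.single j 1 : Fin k → ℝ) := by
    funext j
    simp [Pi.single_apply, Finset.sum_apply]
  calc (A.updateRow i v).det = L v := rfl
    _ = ∑ j, v j * L (Pi.single j 1) := by
        conv_lhs => rw [hv]
        rw [map_sum]; simp [L]
    _ = ∑ j, v j * A.adjugate j i := by
        simp only [L, LinearMap.coe_mk, AddHom.coe_mk, Matrix.adjugate_apply]

/-- Derivative at α = 0 of log det M((1-α)ξ* + αξ') equals -k + Σ ξ'(s) d(s, ξ*). -/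
theorem stmt_4 {S : Type*} [Fintype S] (k : ℕ) (f : S → Fin k → ℝ)
    (ξstar ξ' : S → ℝ)
    (hs0 : ∀ s, 0 ≤ ξstar s) (hs1 : ∑ s, ξstar s = 1)
    (h'0 : ∀ s, 0 ≤ ξ' s) (h'1 : ∑ s, ξ' s = 1)
    (M : (S → ℝ) → Matrix (Fin k) (Fin k) ℝ)
    (hM : ∀ ξ, M ξ = ∑ s, ξ s • Matrix.vecMulVec (f s) (f s))
    (hinv : IsUnit (M ξstar).det) :
    deriv (fun α : ℝ =>
        Real.log (M (fun s => (1 - α) * ξstar s + α * ξ' s)).det) 0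
      = -(k : ℝ) + ∑ s, ξ' s * (f s ⬝ᵥ ((M ξstar)⁻¹ *ᵥ f s)) := by
  classical
  have hne : (M ξstar).det ≠ 0 := hinv.ne_zero
  have hmix : ∀ α : ℝ, M (fun s => (1 - α) * ξstar s + α * ξ' s)
      = M ξstar + α • (M ξ' - M ξstar) := by
    intro α
    have h1 : M (fun s => (1 - α) * ξstar s + α * ξ' s)
        = (1 - α) • M ξstar + α • M ξ' := by
      rw [hM, hM ξstar, hM ξ', Finset.smul_sum, Finset.smul_sum, ← Finset.sum_add_distrib]
      exact Finset.sum_congr rfl fun s _ => by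
        rw [add_smul, mul_smul, mul_smul]
    rw [h1]; module
  set A' : Fin k → Fin k → ℝ := ((M ξstar : Matrix (Fin k) (Fin k) ℝ) : Fin k → Fin k → ℝ)
    with hA'
  set C : Fin k → Fin k → ℝ := ((M ξ' - M ξstar : Matrix (Fin k) (Fin k) ℝ) : Fin k → Fin k → ℝ)
    with hC
  set g : ℝ → (Fin k → Fin k → ℝ) := fun α => A' + α • C with hg
  have hcurve : HasDerivAt g C 0 := by
    have h := ((hasDerivAt_id (0:ℝ)).smul_const C).const_add A'
    simpa [hg] using h
  have hg0 : g 0 = A' := by simp [hg]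
  have hfd' : HasFDerivAt (detCML k) ((detCML k).linearDeriv A') (g 0) := by
    rw [hg0]; exact (detCML k).hasFDerivAt A'
  have hd := hfd'.comp_hasDerivAt 0 hcurve
  have hne' : (⇑(detCML k) ∘ g) 0 ≠ 0 := by
    simpa [Function.comp, hg0, hA', detCML_apply] using hne
  have hlog := hd.log hne'
  have hfinal : HasDerivAt (fun α : ℝ =>
      Real.log (M (fun s => (1 - α) * ξstar s + α * ξ' s)).det)
      ((detCML k).linearDeriv A' C / (⇑(detCML k) ∘ g) 0) 0 := by
    apply hlog.congr_of_eventuallyEq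
    filter_upwards with α
    rw [hmix α]
    rfl
  rw [hfinal.deriv]
  have hval : (detCML k).linearDeriv A' C
      = ∑ i, ∑ j, C i j * (M ξstar).adjugate j i := by
    rw [ContinuousMultilinearMap.linearDeriv_apply]
    refine Finset.sum_congr rfl fun i _ => ?_
    have h2 : detCML k (Function.update A' i (C i))
        = ((M ξstar).updateRow i (C i)).det := rfl
    rw [h2, det_updateRow_eq]
  have hden : (⇑(detCML k) ∘ g) 0 = (M ξstar).det := by
    simp only [Function.comp_apply, hg0]
    rfl
  rw [hval, hden]
  have hdot : ∀ s : S, f s ⬝ᵥ ((M ξstar).adjugate *ᵥ f s)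
      = ∑ i, ∑ j, f s i * ((M ξstar).adjugate i j * f s j) := by
    intro s
    simp [dotProduct, mulVec, Finset.mul_sum]
  have hBij : ∀ i j, (M ξ') i j = ∑ s, ξ' s * (f s i * f s j) := by
    intro i j
    rw [hM ξ']
    simp [Matrix.sum_apply, Matrix.smul_apply, Matrix.vecMulVec_apply, mul_assoc]
  have hB : ∑ i, ∑ j, (M ξ') i j * (M ξstar).adjugate j i
      = ∑ s, ξ' s * (f s ⬝ᵥ ((M ξstar).adjugate *ᵥ f s)) := by
    calc ∑ i, ∑ j, (M ξ') i j * (M ξstar).adjugate j i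
        = ∑ i, ∑ j, ∑ s, ξ' s * (f s i * f s j) * (M ξstar).adjugate j i := by
          simp only [hBij, Finset.sum_mul]
      _ = ∑ i, ∑ s, ∑ j, ξ' s * (f s i * f s j) * (M ξstar).adjugate j i := by
          exact Finset.sum_congr rfl fun i _ => Finset.sum_comm
      _ = ∑ s, ∑ i, ∑ j, ξ' s * (f s i * f s j) * (M ξstar).adjugate j i := Finset.sum_comm
      _ = ∑ s, ∑ j, ∑ i, ξ' s * (f s i * f s j) * (M ξstar).adjugate j i := by
          exact Finset.sum_congr rfl fun s _ => Finset.sum_comm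
      _ = ∑ s, ξ' s * (f s ⬝ᵥ ((M ξstar).adjugate *ᵥ f s)) := by
          refine Finset.sum_congr rfl fun s _ => ?_
          rw [hdot, Finset.mul_sum]
          refine Finset.sum_congr rfl fun j _ => ?_
          rw [Finset.mul_sum]
          exact Finset.sum_congr rfl fun i _ => by ring
  have hA : ∑ i, ∑ j, (M ξstar) i j * (M ξstar).adjugate j i = (k : ℝ) * (M ξstar).det := by
    have h3 : ∀ i : Fin k, ∑ j, (M ξstar) i j * (M ξstar).adjugate j i = (M ξstar).det :=
      fun i => (Matrix.det_eq_sum_mul_adjugate_row (M ξstar) i).symm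
    simp [h3, Finset.sum_const, Finset.card_univ, nsmul_eq_mul]
  have hCij : ∀ i j, C i j = (M ξ') i j - (M ξstar) i j := by
    intro i j; rw [hC]; rfl
  have hsplit : ∑ i, ∑ j, C i j * (M ξstar).adjugate j i
      = (∑ s, ξ' s * (f s ⬝ᵥ ((M ξstar).adjugate *ᵥ f s))) - (k : ℝ) * (M ξstar).det := by
    simp only [hCij, sub_mul, Finset.sum_sub_distrib, hB, hA]
  rw [hsplit]
  have hinvrel : ∀ s : S, f s ⬝ᵥ ((M ξstar)⁻¹ *ᵥ f s)
      = ((M ξstar).det)⁻¹ * (f s ⬝ᵥ ((M ξstar).adjugate *ᵥ f s)) := by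
    intro s
    rw [Matrix.inv_def, Ring.inverse_eq_inv', Matrix.smul_mulVec, dotProduct_smul]
    simp
  rw [hA'] at ⊢
  simp only [hinvrel]
  have hfact : ∑ s, ξ' s * (((M ξstar).det)⁻¹ * (f s ⬝ᵥ ((M ξstar).adjugate *ᵥ f s)))
      = ((M ξstar).det)⁻¹ * ∑ s, ξ' s * (f s ⬝ᵥ ((M ξstar).adjugate *ᵥ f s)) := by
    rw [Finset.mul_sum]
    exact Finset.sum_congr rfl fun s _ => by ring
  rw [hfact]
  have hne2 : (M ξstar).det ≠ 0 := hne
  field_simp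
  ring
end

section
/- Let ξ* be a probability measure on a finite set S with invertible information matrix M(ξ*), f : S → ℝ^k. If for every probability measure ξ' on S the Gateaux derivative at 0 of α ↦ log det M((1-α)ξ* + αξ') is ≤ 0, then f(s)ᵀ M(ξ*)⁻¹ f(s) ≤ k for all s ∈ S. -/
open Matrix Polynomial

lemma det_one_add_smul_eval {n : ℕ} (B : Matrix (Fin n) (Fin n) ℝ) (α : ℝ) :
    (Matrix.det (1 + (X : ℝ[X]) • B.map C)).eval α = (1 + α • B).det := by
  rw [show (Polynomial.eval α) = (Polynomial.evalRingHom α : ℝ[X] → ℝ) from rfl,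
    RingHom.map_det]
  congr 1
  ext i j
  simp only [RingHom.mapMatrix_apply, Matrix.map_apply, Matrix.add_apply, Matrix.smul_apply, Matrix.map_apply,
    smul_eq_mul, eval_add, eval_mul, eval_X, eval_C, Polynomial.eval_one, RingHom.coe_coe,
    Polynomial.coe_evalRingHom]
  rw [Matrix.one_apply, Matrix.one_apply]
  split <;> simp

lemma hasDerivAt_det_one_add_smul {n : ℕ} (B : Matrix (Fin n) (Fin n) ℝ) :
    HasDerivAt (fun α : ℝ => (1 + α • B).det) B.trace 0 := by
  have h := (Matrix.det (1 + (X : ℝ[X]) • B.map C)).hasDerivAt (0 : ℝ)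
  rw [Matrix.derivative_det_one_add_X_smul] at h
  exact h.congr_of_eventuallyEq
    (Filter.Eventually.of_forall fun α => (det_one_add_smul_eval B α).symm)

lemma hasDerivAt_det_add_smul {n : ℕ} (A D : Matrix (Fin n) (Fin n) ℝ)
    (hA : IsUnit A.det) :
    HasDerivAt (fun α : ℝ => (A + α • D).det) (A.det * (A⁻¹ * D).trace) 0 := by
  have key : ∀ α : ℝ, (A + α • D).det = A.det * (1 + α • (A⁻¹ * D)).det := by
    intro α
    rw [← Matrix.det_mul, Matrix.mul_add, Matrix.mul_one, Matrix.mul_smul,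
      ← Matrix.mul_assoc, Matrix.mul_nonsing_inv A hA, Matrix.one_mul]
  have h := (hasDerivAt_det_one_add_smul (A⁻¹ * D)).const_mul A.det
  exact h.congr_of_eventuallyEq (Filter.Eventually.of_forall fun α => key α)

lemma trace_mul_vecMulVec {n : ℕ} (A : Matrix (Fin n) (Fin n) ℝ) (u : Fin n → ℝ) :
    (A * vecMulVec u u).trace = u ⬝ᵥ (A *ᵥ u) := by
  simp only [Matrix.trace, Matrix.diag_apply, Matrix.mul_apply, Matrix.vecMulVec_apply,
    dotProduct, Matrix.mulVec, Finset.mul_sum]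
  exact Finset.sum_congr rfl fun i _ => Finset.sum_congr rfl fun j _ => by ring


/-- If all Gateaux derivatives of log det M at ξ* are ≤ 0, then d(s, ξ*) ≤ k for all s. -/
theorem stmt_5 {S : Type*} [Fintype S] (k : ℕ) (f : S → Fin k → ℝ)
    (ξstar : S → ℝ) (hs0 : ∀ s, 0 ≤ ξstar s) (hs1 : ∑ s, ξstar s = 1)
    (M : (S → ℝ) → Matrix (Fin k) (Fin k) ℝ)
    (hM : ∀ ξ, M ξ = ∑ s, ξ s • Matrix.vecMulVec (f s) (f s))
    (hinv : IsUnit (M ξstar).det)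
    (hderiv : ∀ ξ' : S → ℝ, (∀ s, 0 ≤ ξ' s) → ∑ s, ξ' s = 1 →
      deriv (fun α : ℝ =>
        Real.log (M (fun s => (1 - α) * ξstar s + α * ξ' s)).det) 0 ≤ 0) :
    ∀ s : S, f s ⬝ᵥ ((M ξstar)⁻¹ *ᵥ f s) ≤ (k : ℝ) := by

  classical
  intro t
  set A := M ξstar with hA
  set V := Matrix.vecMulVec (f t) (f t) with hV
  set ξ' : S → ℝ := fun s => if s = t then 1 else 0 with hξ'
  have hξ0 : ∀ s, 0 ≤ ξ' s := fun s => by simp [hξ']; split <;> norm_num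
  have hξ1 : ∑ s, ξ' s = 1 := by simp [hξ']
  have hMξ' : M ξ' = V := by
    rw [hM]
    simp [hξ', ite_smul, hV]
  -- the mixture
  have hmix : ∀ α : ℝ, M (fun s => (1 - α) * ξstar s + α * ξ' s) = A + α • (V - A) := by
    intro α
    rw [hM, hA, hM ξstar, ← hMξ', hM ξ']
    rw [show (∑ s, ((1 - α) * ξstar s + α * ξ' s) • Matrix.vecMulVec (f s) (f s))
        = ∑ s, (((1 - α) • (ξstar s • Matrix.vecMulVec (f s) (f s)))
            + α • (ξ' s • Matrix.vecMulVec (f s) (f s))) from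
      Finset.sum_congr rfl fun s _ => by rw [add_smul, mul_smul, mul_smul]]
    rw [Finset.sum_add_distrib, ← Finset.smul_sum, ← Finset.smul_sum]
    rw [smul_sub, sub_smul, one_smul]
    abel
  set D := V - A with hD
  have hdet0 : A.det ≠ 0 := hinv.ne_zero
  have hder : HasDerivAt (fun α : ℝ => Real.log (A + α • D).det) ((A⁻¹ * D).trace) 0 := by
    have h1 := hasDerivAt_det_add_smul A D hinv
    have h2 : (A + (0:ℝ) • D).det ≠ 0 := by simpa using hdet0
    have h3 := h1.log h2
    have : A.det * (A⁻¹ * D).trace / (A + (0:ℝ) • D).det = (A⁻¹ * D).trace := by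
      rw [show A + (0:ℝ) • D = A by simp]
      field_simp
    rwa [this] at h3
  have hde : deriv (fun α : ℝ =>
      Real.log (M (fun s => (1 - α) * ξstar s + α * ξ' s)).det) 0 = (A⁻¹ * D).trace := by
    have : (fun α : ℝ => Real.log (M (fun s => (1 - α) * ξstar s + α * ξ' s)).det)
        = fun α : ℝ => Real.log (A + α • D).det := by
      funext α; rw [hmix α]
    rw [this, hder.deriv]
  have hle := hderiv ξ' hξ0 hξ1
  rw [hde] at hle
  have htr : (A⁻¹ * D).trace = f t ⬝ᵥ (A⁻¹ *ᵥ f t) - (k : ℝ) := by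
    rw [hD, Matrix.mul_sub, Matrix.trace_sub, Matrix.nonsing_inv_mul A hinv,
      Matrix.trace_one, trace_mul_vecMulVec]
    simp
  rw [htr] at hle
  linarith
end

section
/- Let ξ* be a probability measure on a finite set S with f : S → ℝ^k and M(ξ*) invertible. If max_{s∈S} f(s)ᵀ M(ξ*)⁻¹ f(s) = k, then for any probability measure ξ' on S with M(ξ') defined as usual, det(M(ξ*)) ≥ det(M(ξ')). -/
open Matrix
open scoped MatrixOrder

lemma aux_sum_mulVec {S : Type*} [Fintype S] {k : ℕ} (A : S → Matrix (Fin k) (Fin k) ℝ)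
    (x : Fin k → ℝ) : (∑ s, A s) *ᵥ x = ∑ s, A s *ᵥ x := by
  ext i
  simp [Matrix.mulVec, dotProduct, Matrix.sum_apply, Finset.sum_mul]
  exact Finset.sum_comm

lemma aux_psd {S : Type*} [Fintype S] {k : ℕ} (f : S → Fin k → ℝ) (ξ : S → ℝ)
    (h0 : ∀ s, 0 ≤ ξ s) : (∑ s, ξ s • Matrix.vecMulVec (f s) (f s)).PosSemidef := by
  refine Matrix.PosSemidef.of_dotProduct_mulVec_nonneg ?_ ?_
  · unfold Matrix.IsHermitian
    ext i j
    simp [Matrix.conjTranspose_apply, Matrix.sum_apply, Matrix.vecMulVec_apply, mul_comm]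
  · intro x
    have key : ∀ s : S, (0:ℝ) ≤ star x ⬝ᵥ (ξ s • Matrix.vecMulVec (f s) (f s)) *ᵥ x := by
      intro s
      have : star x ⬝ᵥ (ξ s • Matrix.vecMulVec (f s) (f s)) *ᵥ x
          = ξ s * (f s ⬝ᵥ x) * (f s ⬝ᵥ x) := by
        simp [dotProduct, Matrix.mulVec, Matrix.vecMulVec_apply, Finset.mul_sum,
          Finset.sum_mul, mul_comm, mul_assoc, mul_left_comm]
      rw [this, mul_assoc]
      exact mul_nonneg (h0 s) (mul_self_nonneg _)
    calc (0:ℝ) ≤ ∑ s, star x ⬝ᵥ (ξ s • Matrix.vecMulVec (f s) (f s)) *ᵥ x :=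
          Finset.sum_nonneg fun s _ => key s
      _ = star x ⬝ᵥ (∑ s, ξ s • Matrix.vecMulVec (f s) (f s)) *ᵥ x := by
          rw [aux_sum_mulVec]
          simp [dotProduct, Finset.mul_sum]
          exact Finset.sum_comm

lemma aux_trace {k : ℕ} (A : Matrix (Fin k) (Fin k) ℝ) (v w : Fin k → ℝ) :
    (A * Matrix.vecMulVec v w).trace = w ⬝ᵥ (A *ᵥ v) := by
  simp [Matrix.trace, Matrix.diag, Matrix.mul_apply, Matrix.vecMulVec_apply, dotProduct,
    Matrix.mulVec, Finset.mul_sum, mul_comm, mul_left_comm]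

lemma aux_trsum {k : ℕ} {A : Matrix (Fin k) (Fin k) ℝ} (hA : A.IsHermitian) :
    A.trace = ∑ i, hA.eigenvalues i := by
  nth_rewrite 1 [hA.spectral_theorem]
  rw [Unitary.conjStarAlgAut_apply, Matrix.trace_mul_comm, ← mul_assoc, Unitary.star_mul_self_of_mem hA.eigenvectorUnitary.2,
    one_mul, Matrix.trace_diagonal]
  simp

/-- If the maximum of the variance function at ξ* equals k, then ξ* is D-optimal. -/
theorem stmt_6 {S : Type*} [Fintype S] [Nonempty S] (k : ℕ) (f : S → Fin k → ℝ)
    (ξstar : S → ℝ) (hs0 : ∀ s, 0 ≤ ξstar s) (hs1 : ∑ s, ξstar s = 1)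
    (M : (S → ℝ) → Matrix (Fin k) (Fin k) ℝ)
    (hM : ∀ ξ, M ξ = ∑ s, ξ s • Matrix.vecMulVec (f s) (f s))
    (hinv : IsUnit (M ξstar).det)
    (hmax : Finset.univ.sup' Finset.univ_nonempty
      (fun s => f s ⬝ᵥ ((M ξstar)⁻¹ *ᵥ f s)) = (k : ℝ)) :
    ∀ ξ' : S → ℝ, (∀ s, 0 ≤ ξ' s) → ∑ s, ξ' s = 1 →
      (M ξ').det ≤ (M ξstar).det := by
  intro ξ' h0' h1'
  rcases Nat.eq_zero_or_pos k with rfl | hk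
  · simp [Matrix.det_isEmpty]
  have hk0 : (k : ℝ) ≠ 0 := Nat.cast_ne_zero.mpr hk.ne'
  set N := M ξstar with hNdef
  set Q := M ξ' with hQdef
  have hQpsd : Q.PosSemidef := by rw [hQdef, hM]; exact aux_psd f ξ' h0'
  have hNpsd : N.PosSemidef := by rw [hNdef, hM]; exact aux_psd f ξstar hs0
  -- N is positive definite
  have hN : N.PosDef := by
    refine Matrix.posDef_iff_dotProduct_mulVec.mpr ⟨hNpsd.1, fun x hx => ?_⟩
    rcases lt_or_eq_of_le (hNpsd.dotProduct_mulVec_nonneg x) with h | h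
    · exact h
    · exfalso
      have hNx : N *ᵥ x = 0 := (hNpsd.dotProduct_mulVec_zero_iff x).mp h.symm
      apply hx
      calc x = (N⁻¹ * N) *ᵥ x := by rw [Matrix.nonsing_inv_mul N hinv, Matrix.one_mulVec]
        _ = N⁻¹ *ᵥ (N *ᵥ x) := by rw [← Matrix.mulVec_mulVec]
        _ = 0 := by rw [hNx, Matrix.mulVec_zero]
  have hNdet : 0 < N.det := hN.det_pos
  have hNinv : N⁻¹.PosDef := hN.inv
  set R := CFC.sqrt N⁻¹ with hRdef
  have hRpsd : R.PosSemidef := (CFC.sqrt_nonneg N⁻¹).posSemidef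
  have hRR : R * R = N⁻¹ := CFC.sqrt_mul_sqrt_self N⁻¹ hNinv.posSemidef.nonneg
  set C := R * Q * R with hCdef
  have hC : C.PosSemidef := by
    have := hQpsd.mul_mul_conjTranspose_same R
    rwa [hRpsd.1.eq] at this
  -- trace bound
  have hbound : ∀ s, f s ⬝ᵥ (N⁻¹ *ᵥ f s) ≤ (k : ℝ) := fun s =>
    hmax ▸ Finset.le_sup' (fun s => f s ⬝ᵥ (N⁻¹ *ᵥ f s)) (Finset.mem_univ s)
  have htrC : C.trace = (N⁻¹ * Q).trace := by
    rw [hCdef, Matrix.trace_mul_comm, ← mul_assoc, hRR]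
  have htr2 : (N⁻¹ * Q).trace = ∑ s, ξ' s * (f s ⬝ᵥ (N⁻¹ *ᵥ f s)) := by
    rw [hQdef, hM, Matrix.mul_sum, Matrix.trace_sum]
    simp only [Matrix.mul_smul, Matrix.trace_smul, smul_eq_mul, aux_trace]
  have htrC_le : C.trace ≤ (k : ℝ) := by
    rw [htrC, htr2]
    calc ∑ s, ξ' s * (f s ⬝ᵥ (N⁻¹ *ᵥ f s)) ≤ ∑ s, ξ' s * (k : ℝ) :=
          Finset.sum_le_sum fun s _ => mul_le_mul_of_nonneg_left (hbound s) (h0' s)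
      _ = (k : ℝ) := by rw [← Finset.sum_mul, h1', one_mul]
  -- determinant identity
  have hdetC : C.det = N⁻¹.det * Q.det := by
    have h1 : N⁻¹.det = R.det * R.det := by rw [← hRR, Matrix.det_mul]
    rw [hCdef, Matrix.det_mul, Matrix.det_mul, h1]; ring
  -- eigenvalues of C
  set z := hC.1.eigenvalues with hzdef
  have hz0 : ∀ i, 0 ≤ z i := hC.eigenvalues_nonneg
  have hprod : C.det = ∏ i, z i := by
    have := hC.1.det_eq_prod_eigenvalues
    simpa using this
  have hsum : C.trace = ∑ i, z i := aux_trsum hC.1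
  -- AM-GM
  have hgm := Real.geom_mean_le_arith_mean_weighted Finset.univ (fun _ => 1/(k:ℝ)) z
    (fun i _ => by positivity) (by simp [Finset.card_univ]; field_simp)
    (fun i _ => hz0 i)
  have hP1 : ∏ i, z i ^ ((1:ℝ)/(k:ℝ)) ≤ 1 := by
    refine hgm.trans ?_
    rw [← Finset.mul_sum, ← hsum]
    rw [div_mul_eq_mul_div, one_mul, div_le_one (by positivity)]
    exact htrC_le
  have hpow : ∏ i, z i = (∏ i, z i ^ ((1:ℝ)/(k:ℝ))) ^ k := by
    rw [← Finset.prod_pow]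
    refine Finset.prod_congr rfl fun i _ => ?_
    rw [← Real.rpow_natCast (z i ^ ((1:ℝ)/(k:ℝ))) k, ← Real.rpow_mul (hz0 i),
      one_div_mul_cancel hk0, Real.rpow_one]
  have hdet1 : C.det ≤ 1 := by
    rw [hprod, hpow]
    exact pow_le_one₀ (Finset.prod_nonneg fun i _ => Real.rpow_nonneg (hz0 i) _) hP1
  -- conclude
  have hinvdet : N⁻¹.det = (N.det)⁻¹ := by
    rw [Matrix.det_nonsing_inv, Ring.inverse_eq_inv]
  rw [hdetC, hinvdet] at hdet1
  calc Q.det = N.det * ((N.det)⁻¹ * Q.det) := by field_simp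
    _ ≤ N.det * 1 := mul_le_mul_of_nonneg_left hdet1 hNdet.le
    _ = N.det := mul_one _
end

section
/- Let ξ* be a probability measure on a finite set S maximizing det(M(ξ)) over all probability measures ξ on S, with M(ξ*) invertible. Then f(s)ᵀ M(ξ*)⁻¹ f(s) ≤ k for all s ∈ S, and consequently max_{s∈S} f(s)ᵀ M(ξ*)⁻¹ f(s) = k. -/
open Matrix

lemma quad_form_aux {S : Type*} [Fintype S] {k : ℕ} (c : S → ℝ) (f : S → Fin k → ℝ)
    (x : Fin k → ℝ) :
    x ⬝ᵥ ((∑ s, c s • vecMulVec (f s) (f s)) *ᵥ x) = ∑ s, c s * (f s ⬝ᵥ x) ^ 2 := by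
  simp only [dotProduct, mulVec, Finset.sum_apply, Matrix.sum_apply, Matrix.smul_apply,
    Pi.smul_apply, vecMulVec_apply, smul_eq_mul, Finset.mul_sum, Finset.sum_mul, sq]
  rw [show (∑ i : Fin k, ∑ j : Fin k, ∑ s : S, x i * (c s * (f s i * f s j) * x j))
      = ∑ i : Fin k, ∑ s : S, ∑ j : Fin k, x i * (c s * (f s i * f s j) * x j) from
      Finset.sum_congr rfl fun i _ => Finset.sum_comm, Finset.sum_comm]
  refine Finset.sum_congr rfl fun s _ => Finset.sum_congr rfl fun i _ =>
    Finset.sum_congr rfl fun j _ => by ring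

lemma trace_mul_vecMulVec_aux {k : ℕ} (B : Matrix (Fin k) (Fin k) ℝ) (u : Fin k → ℝ) :
    trace (B * vecMulVec u u) = u ⬝ᵥ (B *ᵥ u) := by
  simp only [trace, diag, mul_apply, vecMulVec_apply, dotProduct, mulVec,
    Finset.mul_sum, Finset.sum_mul]
  refine Finset.sum_congr rfl fun i _ => Finset.sum_congr rfl fun j _ => by ring

/-- D-optimality of ξ* implies d(s, ξ*) ≤ k for all s and max d(·, ξ*) = k. -/
theorem stmt_7 {S : Type*} [Fintype S] [Nonempty S] (k : ℕ) (f : S → Fin k → ℝ)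
    (ξstar : S → ℝ) (hs0 : ∀ s, 0 ≤ ξstar s) (hs1 : ∑ s, ξstar s = 1)
    (M : (S → ℝ) → Matrix (Fin k) (Fin k) ℝ)
    (hM : ∀ ξ, M ξ = ∑ s, ξ s • Matrix.vecMulVec (f s) (f s))
    (hinv : IsUnit (M ξstar).det)
    (hopt : ∀ ξ : S → ℝ, (∀ s, 0 ≤ ξ s) → ∑ s, ξ s = 1 →
      (M ξ).det ≤ (M ξstar).det) :
    (∀ s : S, f s ⬝ᵥ ((M ξstar)⁻¹ *ᵥ f s) ≤ (k : ℝ)) ∧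
    Finset.univ.sup' Finset.univ_nonempty
      (fun s => f s ⬝ᵥ ((M ξstar)⁻¹ *ᵥ f s)) = (k : ℝ) := by
  classical
  set A := M ξstar with hA
  have hA0 : A = ∑ s, ξstar s • vecMulVec (f s) (f s) := hM ξstar
  -- positive semidefiniteness of A
  have hPSD : A.PosSemidef := by
    rw [posSemidef_iff_dotProduct_mulVec]
    constructor
    · ext i j
      simp only [hA0, conjTranspose_apply, Matrix.sum_apply, Matrix.smul_apply,
        vecMulVec_apply, smul_eq_mul, star_trivial]
      exact Finset.sum_congr rfl fun s _ => by ring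
    · intro x
      rw [star_trivial, hA0, quad_form_aux]
      exact Finset.sum_nonneg fun s _ => mul_nonneg (hs0 s) (sq_nonneg _)
  have hdetpos : 0 < A.det := by
    have h0 : 0 ≤ A.det := by
      rw [hPSD.1.det_eq_prod_eigenvalues]
      exact Finset.prod_nonneg fun i _ => hPSD.eigenvalues_nonneg i
    exact lt_of_le_of_ne h0 (Ne.symm hinv.ne_zero)
  -- part one: variance bound
  have part1 : ∀ s : S, f s ⬝ᵥ (A⁻¹ *ᵥ f s) ≤ (k : ℝ) := by
    intro s
    by_cases hk : k = 0
    · subst hk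
      simp [dotProduct]
    obtain ⟨m, rfl⟩ : ∃ m, k = m + 1 := ⟨k - 1, (Nat.succ_pred_eq_of_pos (Nat.pos_of_ne_zero hk)).symm⟩
    set d : ℝ := f s ⬝ᵥ (A⁻¹ *ᵥ f s) with hd
    have key : ∀ ε : ℝ, ε ∈ Set.Ioo (0:ℝ) 1 → (1-ε)^m * d ≤ (m+1 : ℝ) := by
      rintro ε ⟨hε0, hε1⟩
      have h1ε : (0:ℝ) < 1 - ε := by linarith
      set c : ℝ := ε / (1 - ε) with hc
      have hεc : (1 - ε) * c = ε := by rw [hc]; field_simp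
      set ξε : S → ℝ := fun t => (1-ε) * ξstar t + ε * (if t = s then 1 else 0) with hξε
      have hξ0 : ∀ t, 0 ≤ ξε t := by
        intro t
        have h4 : 0 ≤ (1-ε) * ξstar t := mul_nonneg h1ε.le (hs0 t)
        have h5 : (0:ℝ) ≤ ε * if t = s then 1 else 0 := by
          by_cases h : t = s <;> simp [h, hε0.le]
        exact add_nonneg h4 h5
      have hξ1 : ∑ t, ξε t = 1 := by
        have h2 : ∑ t, (if t = s then (1:ℝ) else 0) = 1 := by simp
        simp only [hξε, Finset.sum_add_distrib, ← Finset.mul_sum, hs1, h2]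
        ring
      have hMξ : M ξε = (1-ε) • A + ε • vecMulVec (f s) (f s) := by
        have h3 : ε • vecMulVec (f s) (f s)
            = ∑ t, (ε * if t = s then (1:ℝ) else 0) • vecMulVec (f t) (f t) := by
          rw [show (∑ t, (ε * if t = s then (1:ℝ) else 0) • vecMulVec (f t) (f t))
              = ∑ t, (if t = s then ε • vecMulVec (f t) (f t) else 0) from
            Finset.sum_congr rfl fun t _ => by by_cases h : t = s <;> simp [h]]
          simp
        rw [hM, hA0, Finset.smul_sum, h3, ← Finset.sum_add_distrib]
        refine Finset.sum_congr rfl fun t _ => ?_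
        show ((1-ε) * ξstar t + ε * if t = s then (1:ℝ) else 0) • vecMulVec (f t) (f t)
          = (1-ε) • ξstar t • vecMulVec (f t) (f t)
            + (ε * if t = s then (1:ℝ) else 0) • vecMulVec (f t) (f t)
        rw [add_smul, mul_smul]
      set B : Matrix (Fin (m+1)) (Fin (m+1)) ℝ :=
        1 + replicateCol (Fin 1) (c • (A⁻¹ *ᵥ f s)) * replicateRow (Fin 1) (f s) with hB
      have hAB : A * B = A + c • vecMulVec (f s) (f s) := by
        rw [hB, mul_add, mul_one, ← Matrix.mul_assoc, replicateCol_smul, Matrix.mul_smul,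
          ← replicateCol_mulVec, mulVec_mulVec, Matrix.mul_nonsing_inv A hinv, one_mulVec,
          Matrix.smul_mul]
        erw [← vecMulVec_eq (ι := Fin 1)]
      have hfac : M ξε = (1-ε) • (A * B) := by
        rw [hAB, smul_add, hMξ, smul_smul, hεc]
      have hdetB : B.det = 1 + c * d := by
        rw [hB]
        erw [det_one_add_replicateCol_mul_replicateRow (ι := Fin 1)]
        rw [dotProduct_smul, smul_eq_mul, hd]
      have hdet : (M ξε).det = (1-ε)^(m+1) * (A.det * (1 + c * d)) := by
        rw [hfac, det_smul, det_mul, hdetB]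
        simp [Fintype.card_fin]
      have hle := hopt ξε hξ0 hξ1
      rw [hdet] at hle
      have hkey : (1-ε)^(m+1) * (1 + c * d) ≤ 1 := by
        have heq : ((1-ε)^(m+1) * (1 + c * d)) * A.det
            = (1-ε)^(m+1) * (A.det * (1 + c * d)) := by ring
        have h2 : ((1-ε)^(m+1) * (1 + c * d)) * A.det ≤ 1 * A.det := by
          rw [one_mul, heq]; exact hle
        exact le_of_mul_le_mul_right h2 hdetpos
      have hexp : (1-ε)^(m+1) * (1 + c * d) = (1-ε)^(m+1) + ε * ((1-ε)^m * d) := by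
        have : (1-ε)^(m+1) = (1-ε)^m * (1-ε) := by ring
        rw [this]
        calc (1-ε)^m * (1-ε) * (1 + c * d)
            = (1-ε)^m * (1-ε) + (1-ε)^m * ((1-ε) * c) * d := by ring
          _ = (1-ε)^m * (1-ε) + ε * ((1-ε)^m * d) := by rw [hεc]; ring
      have hbern : 1 - (m+1 : ℝ) * ε ≤ (1-ε)^(m+1) := by
        have := one_add_mul_le_pow (a := -ε) (by linarith) (m+1)
        push_cast at this ⊢
        calc (1 : ℝ) - (m+1) * ε = 1 + (m+1) * (-ε) := by ring
          _ ≤ (1 + -ε) ^ (m+1) := this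
          _ = (1 - ε) ^ (m+1) := by ring_nf
      rw [hexp] at hkey
      have hεd : ε * ((1-ε)^m * d) ≤ ε * (m+1 : ℝ) := by nlinarith
      exact le_of_mul_le_mul_left hεd hε0
    have htend : Filter.Tendsto (fun ε : ℝ => (1-ε)^m * d) (nhdsWithin 0 (Set.Ioi 0))
        (nhds d) := by
      have hcont : Continuous fun ε : ℝ => (1-ε)^m * d := by continuity
      have := hcont.tendsto 0
      simp only [sub_zero, one_pow, one_mul] at this
      exact this.mono_left nhdsWithin_le_nhds
    have hev : ∀ᶠ ε in nhdsWithin (0:ℝ) (Set.Ioi 0), (1-ε)^m * d ≤ (m+1 : ℝ) := by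
      filter_upwards [Ioo_mem_nhdsGT_of_mem (Set.mem_Ico.mpr ⟨le_refl 0, one_pos⟩)] with ε hε
      exact key ε hε
    have hfin := le_of_tendsto htend hev
    rw [hd] at hfin
    push_cast
    exact hfin
  -- trace identity
  have htr : ∑ s, ξstar s * (f s ⬝ᵥ (A⁻¹ *ᵥ f s)) = (k : ℝ) := by
    have h1 : trace (A⁻¹ * A)
        = trace (A⁻¹ * ∑ s, ξstar s • vecMulVec (f s) (f s)) :=
      congrArg (fun X => trace (A⁻¹ * X)) hA0
    have h2 : trace (A⁻¹ * ∑ s, ξstar s • vecMulVec (f s) (f s))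
        = ∑ s, ξstar s * (f s ⬝ᵥ (A⁻¹ *ᵥ f s)) := by
      rw [Matrix.mul_sum, trace_sum]
      refine Finset.sum_congr rfl fun s _ => ?_
      rw [Matrix.mul_smul, trace_smul, trace_mul_vecMulVec_aux, smul_eq_mul]
    rw [← h2, ← h1, Matrix.nonsing_inv_mul A hinv, trace_one]
    simp
  constructor
  · exact part1
  · apply le_antisymm
    · exact Finset.sup'_le _ _ fun s _ => part1 s
    · rw [← htr]
      have havg : ∀ X : ℝ, ∑ i : S, ξstar i * X = X := fun X => by
        rw [← Finset.sum_mul, hs1, one_mul]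
      have hub : ∀ t : S, f t ⬝ᵥ (A⁻¹ *ᵥ f t)
          ≤ Finset.univ.sup' Finset.univ_nonempty (fun s => f s ⬝ᵥ (A⁻¹ *ᵥ f s)) := fun t =>
        Finset.le_sup' (fun s => f s ⬝ᵥ (A⁻¹ *ᵥ f s)) (Finset.mem_univ t)
      refine le_trans (Finset.sum_le_sum fun s _ =>
        mul_le_mul_of_nonneg_left (hub s) (hs0 s)) ?_
      exact le_of_eq (havg _)
end
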